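/- Let α, β be injective partial endomorphisms of the path P_n. Then α and β are R-related in IEnd(P_n) (there exist γ, δ ∈ IEnd(P_n) with β = αγ and α = βδ) if and only if Dom α = Dom β and α⁻¹β is a partial automorphism of P_n. -/

import Mathlib

open scoped Classical

/-- `adj u v` means `|u - v| = 1`, i.e. `u` and `v` are adjacent in the path. -/
def adj (u v : ℕ) : Prop := u + 1 = v ∨ v + 1 = u

/-- `f` is an injective partial endomorphism of the path `P_n` on `{1,…,n}`. -/
structure IsIEnd (n : ℕ) (f : ℕ →. ℕ) : Prop where
  dom_subset : f.Dom ⊆ Set.Icc 1 n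
  ran_subset : f.ran ⊆ Set.Icc 1 n
  inj : ∀ ⦃x y a : ℕ⦄, a ∈ f x → a ∈ f y → x = y
  edge : ∀ ⦃u v a b : ℕ⦄, a ∈ f u → b ∈ f v → adj u v → adj a b

/-- `f` is a partial automorphism of the path `P_n`. -/
def IsPAut (n : ℕ) (f : ℕ →. ℕ) : Prop :=
  IsIEnd n f ∧ ∀ ⦃u v a b : ℕ⦄, a ∈ f u → b ∈ f v → adj a b → adj u v

/-- Left-to-right composition of partial maps: `x (pcomp f g) = (x f) g`. -/
def pcomp (f g : ℕ →. ℕ) : ℕ →. ℕ := PFun.comp g f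

/-- The inverse of an injective partial map. -/
noncomputable def pinv (f : ℕ →. ℕ) : ℕ →. ℕ :=
  fun y => ⟨∃ x, y ∈ f x, fun h => h.choose⟩

/-- `I` is an interval of `X`: a set of consecutive integers contained in `X`. -/
def IsIntervalOf (I X : Set ℕ) : Prop :=
  I ⊆ X ∧ ∀ ⦃x⦄, x ∈ I → ∀ ⦃y⦄, y ∈ I → ∀ ⦃z : ℕ⦄, x < z → z < y → z ∈ I

/-- `I` is a maximal interval of `X`. -/
def IsMaxIntervalOf (I X : Set ℕ) : Prop :=
  IsIntervalOf I X ∧ ∀ J, IsIntervalOf J X → I ⊆ J → I = J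

lemma mem_pcomp {f g : ℕ →. ℕ} {x b : ℕ} :
    b ∈ pcomp f g x ↔ ∃ a, a ∈ f x ∧ b ∈ g a := by
  simp [pcomp, PFun.comp_apply, Part.mem_bind_iff]
  exact Part.mem_bind_iff

lemma mem_pinv {f : ℕ →. ℕ} (hinj : ∀ ⦃x y a : ℕ⦄, a ∈ f x → a ∈ f y → x = y)
    {x y : ℕ} : x ∈ pinv f y ↔ y ∈ f x := by
  constructor
  · rintro ⟨h, rfl⟩
    exact h.choose_spec
  · intro hx
    have h : ∃ x, y ∈ f x := ⟨x, hx⟩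
    exact ⟨h, hinj h.choose_spec hx⟩

/-- Membership description of `α⁻¹β`. -/
lemma mem_invcomp {f g : ℕ →. ℕ} (hinj : ∀ ⦃x y a : ℕ⦄, a ∈ f x → a ∈ f y → x = y)
    {a c : ℕ} : c ∈ pcomp (pinv f) g a ↔ ∃ x, a ∈ f x ∧ c ∈ g x := by
  rw [mem_pcomp]
  constructor
  · rintro ⟨x, hx, hc⟩
    exact ⟨x, (mem_pinv hinj).1 hx, hc⟩
  · rintro ⟨x, hx, hc⟩
    exact ⟨x, (mem_pinv hinj).2 hx, hc⟩

theorem stmt7 (n : ℕ) (α β : ℕ →. ℕ) (hα : IsIEnd n α) (hβ : IsIEnd n β) :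
    (∃ γ δ : ℕ →. ℕ, IsIEnd n γ ∧ IsIEnd n δ ∧ β = pcomp α γ ∧ α = pcomp β δ) ↔
    (α.Dom = β.Dom ∧ IsPAut n (pcomp (pinv α) β)) := by
  constructor
  · rintro ⟨γ, δ, hγ, hδ, hβeq, hαeq⟩
    have hdom : α.Dom = β.Dom := by
      ext x
      simp only [PFun.mem_dom]
      constructor
      · rintro ⟨a, ha⟩
        obtain ⟨c, hc, -⟩ := mem_pcomp.1 (hαeq ▸ ha)
        exact ⟨c, hc⟩
      · rintro ⟨b, hb⟩
        obtain ⟨a, ha, -⟩ := mem_pcomp.1 (hβeq ▸ hb)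
        exact ⟨a, ha⟩
    refine ⟨hdom, ⟨⟨?_, ?_, ?_, ?_⟩, ?_⟩⟩
    · intro a ha
      obtain ⟨c, hc⟩ := (PFun.mem_dom _ _).1 ha
      obtain ⟨x, hx, -⟩ := (mem_invcomp hα.inj).1 hc
      exact hα.ran_subset ⟨x, hx⟩
    · intro c hc
      obtain ⟨a, ha⟩ := hc
      obtain ⟨x, -, hx⟩ := (mem_invcomp hα.inj).1 ha
      exact hβ.ran_subset ⟨x, hx⟩
    · intro a a' c hc hc'
      obtain ⟨x, hx, hbx⟩ := (mem_invcomp hα.inj).1 hc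
      obtain ⟨x', hx', hbx'⟩ := (mem_invcomp hα.inj).1 hc'
      have hxx : x = x' := hβ.inj hbx hbx'
      subst hxx
      exact Part.mem_unique hx hx'
    · intro a b c d hc hd hadj
      obtain ⟨x, hx, hbx⟩ := (mem_invcomp hα.inj).1 hc
      obtain ⟨y, hy, hby⟩ := (mem_invcomp hα.inj).1 hd
      obtain ⟨a', ha', hcg⟩ := mem_pcomp.1 (hβeq ▸ hbx)
      obtain ⟨b', hb', hdg⟩ := mem_pcomp.1 (hβeq ▸ hby)
      rw [Part.mem_unique ha' hx] at hcg
      rw [Part.mem_unique hb' hy] at hdg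
      exact hγ.edge hcg hdg hadj
    · intro a b c d hc hd hadj
      obtain ⟨x, hx, hbx⟩ := (mem_invcomp hα.inj).1 hc
      obtain ⟨y, hy, hby⟩ := (mem_invcomp hα.inj).1 hd
      obtain ⟨c', hc', had⟩ := mem_pcomp.1 (hαeq ▸ hx)
      obtain ⟨d', hd', hbd⟩ := mem_pcomp.1 (hαeq ▸ hy)
      rw [Part.mem_unique hc' hbx] at had
      rw [Part.mem_unique hd' hby] at hbd
      exact hδ.edge had hbd hadj
  · rintro ⟨hdom, hθ, hθ2⟩
    refine ⟨pcomp (pinv α) β, pcomp (pinv β) α, hθ, ⟨?_, ?_, ?_, ?_⟩, ?_, ?_⟩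
    · intro c hc
      obtain ⟨a, ha⟩ := (PFun.mem_dom _ _).1 hc
      obtain ⟨x, hx, -⟩ := (mem_invcomp hβ.inj).1 ha
      exact hβ.ran_subset ⟨x, hx⟩
    · intro a ha
      obtain ⟨c, hc⟩ := ha
      obtain ⟨x, -, hx⟩ := (mem_invcomp hβ.inj).1 hc
      exact hα.ran_subset ⟨x, hx⟩
    · intro c c' a ha ha'
      obtain ⟨x, hx, hax⟩ := (mem_invcomp hβ.inj).1 ha
      obtain ⟨x', hx', hax'⟩ := (mem_invcomp hβ.inj).1 ha'
      have hxx : x = x' := hα.inj hax hax'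
      subst hxx
      exact Part.mem_unique hx hx'
    · intro c d a b ha hb hadj
      obtain ⟨x, hx, hax⟩ := (mem_invcomp hβ.inj).1 ha
      obtain ⟨y, hy, hby⟩ := (mem_invcomp hβ.inj).1 hb
      exact hθ2 ((mem_invcomp hα.inj).2 ⟨x, hax, hx⟩)
        ((mem_invcomp hα.inj).2 ⟨y, hby, hy⟩) hadj
    · apply PFun.ext
      intro x b
      rw [mem_pcomp]
      constructor
      · intro hb
        have hx : x ∈ α.Dom := hdom ▸ (PFun.mem_dom _ _).2 ⟨b, hb⟩
        obtain ⟨a, ha⟩ := (PFun.mem_dom _ _).1 hx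
        exact ⟨a, ha, (mem_invcomp hα.inj).2 ⟨x, ha, hb⟩⟩
      · rintro ⟨a, ha, hb⟩
        obtain ⟨x', hx', hbx'⟩ := (mem_invcomp hα.inj).1 hb
        rwa [hα.inj ha hx']
    · apply PFun.ext
      intro x a
      rw [mem_pcomp]
      constructor
      · intro ha
        have hx : x ∈ β.Dom := hdom ▸ (PFun.mem_dom _ _).2 ⟨a, ha⟩
        obtain ⟨c, hc⟩ := (PFun.mem_dom _ _).1 hx
        exact ⟨c, hc, (mem_invcomp hβ.inj).2 ⟨x, hc, ha⟩⟩
      · rintro ⟨c, hc, ha⟩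
        obtain ⟨x', hx', hax'⟩ := (mem_invcomp hβ.inj).1 ha
        rwa [hβ.inj hc hx']
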